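/- Let t < s < d be integers with s^2 > dt and let T = {t}. Then the strict vector chromatic number of the graph K(d,s,{t}) is at most d(s-t)/(s^2 - dt). -/

import Mathlib

/-- The generalized Kneser graph `K(d, s, T)`. -/
def kneser (d s : ℕ) (T : Set ℕ) : SimpleGraph {A : Finset (Fin d) // A.card = s} where
  Adj A B := A ≠ B ∧ (A.1 ∩ B.1).card ∈ T
  symm := ⟨fun A B h => ⟨h.1.symm, by rw [Finset.inter_comm]; exact h.2⟩⟩
  loopless := ⟨fun A h => h.1 rfl⟩

/-- The strict vector chromatic number of a graph `G`: the infimum over `κ > 1` such that each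
vertex can be assigned a unit vector with `⟪w u, w v⟫ = -1/(κ-1)` for every edge `{u, v}`. -/
noncomputable def strictVectorChromaticNumber {V : Type*} (G : SimpleGraph V) : ℝ :=
  sInf {κ : ℝ | 1 < κ ∧ ∃ (m : ℕ) (w : V → EuclideanSpace ℝ (Fin m)),
    (∀ v, ‖w v‖ = 1) ∧ ∀ u v : V, G.Adj u v → (inner ℝ (w u) (w v) : ℝ) = -(1 / (κ - 1))}

lemma kneser_key_sum (d : ℕ) (A B : Finset (Fin d)) (c : ℝ) :
    ∑ i : Fin d, ((if i ∈ A then (1:ℝ) else 0) - c) * ((if i ∈ B then (1:ℝ) else 0) - c)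
      = ((A ∩ B).card : ℝ) - c * A.card - c * B.card + d * c ^ 2 := by
  have h1 : ∀ i : Fin d,
      ((if i ∈ A then (1:ℝ) else 0) - c) * ((if i ∈ B then (1:ℝ) else 0) - c)
        = (if i ∈ A ∩ B then (1:ℝ) else 0) - c * (if i ∈ A then (1:ℝ) else 0)
          - c * (if i ∈ B then (1:ℝ) else 0) + c ^ 2 := by
    intro i
    by_cases hA : i ∈ A <;> by_cases hB : i ∈ B <;>
      simp [Finset.mem_inter, hA, hB] <;> ring
  rw [Finset.sum_congr rfl fun i _ => h1 i]
  have hs : ∀ C : Finset (Fin d),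
      ∑ i : Fin d, (if i ∈ C then (1:ℝ) else 0) = (C.card : ℝ) := by
    intro C
    rw [Finset.sum_boole]
    congr 1
    rw [Finset.filter_mem_eq_inter, Finset.univ_inter]
  simp only [Finset.sum_add_distrib, Finset.sum_sub_distrib, ← Finset.mul_sum, hs,
    Finset.sum_const, Finset.card_univ, Fintype.card_fin, nsmul_eq_mul]

/-- For `t < s < d` with `s² > d·t`, the strict vector chromatic number of `K(d, s, {t})` is
at most `d(s - t)/(s² - d·t)`. -/
theorem strictVectorChromaticNumber_kneser_le (d s t : ℕ) (hts : t < s) (hsd : s < d)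
    (h : d * t < s ^ 2) :
    strictVectorChromaticNumber (kneser d s ({t} : Set ℕ)) ≤
      ((d : ℝ) * ((s : ℝ) - (t : ℝ))) / ((s : ℝ) ^ 2 - (d : ℝ) * (t : ℝ)) := by
  have hd0 : (0:ℝ) < d := by exact_mod_cast Nat.zero_lt_of_lt hsd
  have hs0 : (0:ℝ) < s := by exact_mod_cast Nat.zero_lt_of_lt hts
  have hsd' : (s:ℝ) < d := by exact_mod_cast hsd
  have hts' : (t:ℝ) < s := by exact_mod_cast hts
  have hdenom : (0:ℝ) < (s:ℝ) ^ 2 - d * t := by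
    have : (d:ℝ) * t < (s:ℝ) ^ 2 := by exact_mod_cast h
    linarith
  set κ : ℝ := ((d : ℝ) * ((s : ℝ) - (t : ℝ))) / ((s : ℝ) ^ 2 - (d : ℝ) * (t : ℝ)) with hκ
  have hκ1 : 1 < κ := by
    rw [hκ, lt_div_iff₀ hdenom]
    nlinarith
  apply csInf_le
  · exact ⟨1, fun x hx => hx.1.le⟩
  refine ⟨hκ1, d, ?_⟩
  set c : ℝ := s / d with hc
  set N : ℝ := (s : ℝ) - s ^ 2 / d with hN
  have hNpos : 0 < N := by
    rw [hN, sub_pos, div_lt_iff₀ hd0]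
    nlinarith
  set r : ℝ := (Real.sqrt N)⁻¹ with hr
  have hrpos : 0 < r := by
    rw [hr]
    exact inv_pos.mpr (Real.sqrt_pos.mpr hNpos)
  set w : {A : Finset (Fin d) // A.card = s} → EuclideanSpace ℝ (Fin d) :=
    fun A => r • WithLp.toLp 2 (fun i => (if i ∈ A.1 then (1:ℝ) else 0) - c) with hw
  have hinner : ∀ A B : {A : Finset (Fin d) // A.card = s},
      (inner ℝ (w A) (w B) : ℝ) = r ^ 2 * (((A.1 ∩ B.1).card : ℝ) - s ^ 2 / d) := by
    intro A B
    simp only [hw, PiLp.inner_apply, RCLike.inner_apply, conj_trivial, PiLp.smul_apply,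
      Pi.smul_apply, PiLp.toLp_apply, smul_eq_mul]
    have hsum : ∑ i : Fin d, r * ((if i ∈ B.1 then (1:ℝ) else 0) - c)
          * (r * ((if i ∈ A.1 then (1:ℝ) else 0) - c))
        = r ^ 2 * ∑ i : Fin d,
            ((if i ∈ A.1 then (1:ℝ) else 0) - c) * ((if i ∈ B.1 then (1:ℝ) else 0) - c) := by
      rw [Finset.mul_sum]
      exact Finset.sum_congr rfl fun i _ => by ring
    rw [hsum, kneser_key_sum d A.1 B.1 c, A.2, B.2, hc]
    have hd0' : (d:ℝ) ≠ 0 := ne_of_gt hd0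
    field_simp
    ring
  have hrN : r ^ 2 * N = 1 := by
    rw [hr, hN]
    rw [inv_pow, inv_mul_eq_div, div_eq_one_iff_eq (by positivity)]
    rw [Real.sq_sqrt hNpos.le]
  refine ⟨w, ?_, ?_⟩
  · intro A
    have h1 : (inner ℝ (w A) (w A) : ℝ) = 1 := by
      rw [hinner A A, Finset.inter_self, A.2]
      rw [hN] at hrN
      linarith [hrN]
    have := real_inner_self_eq_norm_sq (w A)
    have hn : ‖w A‖ ^ 2 = 1 := by rw [← this, h1]
    nlinarith [norm_nonneg (w A)]
  · intro A B hAB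
    obtain ⟨hne, hcard⟩ := (hAB : A ≠ B ∧ (A.1 ∩ B.1).card ∈ ({t} : Set ℕ))
    have hcard' : ((A.1 ∩ B.1).card : ℝ) = t := by
      simp only [Set.mem_singleton_iff] at hcard
      exact_mod_cast hcard
    rw [hinner A B, hcard']
    have hr2 : r ^ 2 = N⁻¹ := by
      field_simp at hrN ⊢
      linarith [hrN]
    have hds : (0:ℝ) < (d:ℝ) * s - s ^ 2 := by nlinarith
    have hκsub : κ - 1 = ((d:ℝ) * s - (s:ℝ) ^ 2) / ((s:ℝ) ^ 2 - d * t) := by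
      rw [hκ]
      field_simp
      ring
    rw [hr2, hN, hκsub, one_div, inv_div]
    have hd0' : (d:ℝ) ≠ 0 := ne_of_gt hd0
    have hds' : (d:ℝ) * s - (s:ℝ) ^ 2 ≠ 0 := ne_of_gt hds
    have hN0' : (s:ℝ) - (s:ℝ) ^ 2 / d ≠ 0 := by rw [hN] at hNpos; exact ne_of_gt hNpos
    rw [inv_mul_eq_div, ← neg_div, div_eq_div_iff hN0' hds']
    field_simp
    ring
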